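/- Let G be a group, R a G-graded algebra, D a G-graded division algebra, V a graded right D-vector space, and W ⊆ V^{gr*} a total graded subspace, with F_W^{gr}(V) ⊆ R ⊆ L_W^{gr}(V). Then F_W^{gr}(V) is a graded two-sided ideal of L_W^{gr}(V) and is graded simple; consequently R is graded simple if and only if R = F_W^{gr}(V). -/

import Mathlib

section

variable {G : Type*} [Group G] {V : Type*} [AddCommGroup V]

/-- An operator `A` on a `G`-graded abelian group `V` is homogeneous (of some
degree `t`) if it shifts every homogeneous component by `t`. -/
def IsHomogeneousOp (𝒱 : G → AddSubgroup V) (A : V → V) : Prop :=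
  ∃ t : G, ∀ g : G, ∀ v ∈ 𝒱 g, A v ∈ 𝒱 (t * g)

variable {D : Type*} [Ring D] [Module Dᵐᵒᵖ V]

/-- A subgroup of operators is graded if each of its elements lies in the additive
closure of its homogeneous elements. -/
def IsGradedOpSubgroup (𝒱 : G → AddSubgroup V)
    (S : AddSubgroup (Module.End Dᵐᵒᵖ V)) : Prop :=
  ∀ x ∈ S, x ∈ AddSubgroup.closure
    {y : Module.End Dᵐᵒᵖ V | y ∈ S ∧ IsHomogeneousOp 𝒱 (⇑y)}

/-- `T` is a two-sided ideal of `S` (inside `End_D(V)`). -/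
def IsIdealOf (S T : AddSubgroup (Module.End Dᵐᵒᵖ V)) : Prop :=
  T ≤ S ∧ ∀ a ∈ S, ∀ x ∈ T, a * x ∈ T ∧ x * a ∈ T

/-- `S` is graded simple: `S² ≠ 0` and `S` has no nonzero proper graded two-sided
ideals. -/
def IsGradedSimpleOpSubgroup (𝒱 : G → AddSubgroup V)
    (S : AddSubgroup (Module.End Dᵐᵒᵖ V)) : Prop :=
  (∃ x ∈ S, ∃ y ∈ S, x * y ≠ 0) ∧
  ∀ T : AddSubgroup (Module.End Dᵐᵒᵖ V),
    IsIdealOf S T → IsGradedOpSubgroup 𝒱 T → T = ⊥ ∨ T = S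

end

section Helpers

theorem my_internal_induction {G : Type*} [DecidableEq G] {V : Type*} [AddCommGroup V]
    (𝒱 : G → AddSubgroup V) (h : DirectSum.IsInternal 𝒱)
    {P : V → Prop} (h0 : P 0) (hadd : ∀ a b, P a → P b → P (a + b))
    (hhom : ∀ g : G, ∀ v ∈ 𝒱 g, P v) (v : V) : P v := by
  obtain ⟨x, rfl⟩ := h.surjective v
  induction x using DirectSum.induction_on with
  | zero => simpa using h0
  | of i x => rw [DirectSum.coeAddMonoidHom_of]; exact hhom i x.1 x.2
  | add a b ha hb => rw [map_add]; exact hadd _ _ ha hb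

/-- The rank-one operator `u ↦ v (B w u)`. -/
def rankOne {D : Type*} [Ring D] {V : Type*} [AddCommGroup V] [Module Dᵐᵒᵖ V]
    {W : Type*} (B : W → V → D)
    (hBadd₂ : ∀ (w : W) (v v' : V), B w (v + v') = B w v + B w v')
    (hBr : ∀ (w : W) (v : V) (d : D), B w ((MulOpposite.op d) • v) = B w v * d)
    (v : V) (w : W) : Module.End Dᵐᵒᵖ V where
  toFun u := (MulOpposite.op (B w u)) • v
  map_add' u u' := by rw [hBadd₂, MulOpposite.op_add, add_smul]
  map_smul' m u := by
    simp only [RingHom.id_apply]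
    rw [show m • u = MulOpposite.op m.unop • u by rw [MulOpposite.op_unop], hBr,
      MulOpposite.op_mul, MulOpposite.op_unop, mul_smul]

end Helpers

/-- Setting of the structure theorem: `D` a `G`-graded division ring,
`V` a graded right `D`-vector space, `W` a total graded left `D`-vector space paired
with `V` (i.e. a total graded subspace of the graded dual `V^{gr*}` presented via a
nondegenerate homogeneous pairing `B`).  Define `𝔏 = L_W^{gr}(V)` as the additive
closure of the homogeneous operators whose adjoint preserves `W`, and
`𝔉 = F_W^{gr}(V)` as the additive closure of the homogeneous rank-one operators
`v ⊗ w : u ↦ v (w,u)`.  Then `𝔉` is a graded two-sided ideal of `𝔏` and is graded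
simple; consequently a graded ring `R` with `𝔉 ⊆ R ⊆ 𝔏` is graded simple if and
only if `R = 𝔉`. -/
theorem finitary_graded_operators_unique_graded_simple
    {G : Type*} [Group G] [DecidableEq G] {D : Type*} [Ring D] [Nontrivial D]
    (𝒟 : G → AddSubgroup D)
    (hDmul : ∀ g h : G, ∀ x ∈ 𝒟 g, ∀ y ∈ 𝒟 h, x * y ∈ 𝒟 (g * h))
    (hDone : (1 : D) ∈ 𝒟 1)
    (hDdecomp : DirectSum.IsInternal 𝒟)
    (hDdiv : ∀ x : D, x ≠ 0 → (∃ g, x ∈ 𝒟 g) → IsUnit x)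
    -- `V`, a graded right `D`-vector space
    {V : Type*} [AddCommGroup V] [Module Dᵐᵒᵖ V] [Nontrivial V]
    (𝒱 : G → AddSubgroup V)
    (hVdecomp : DirectSum.IsInternal 𝒱)
    (hVsmul : ∀ g h : G, ∀ v ∈ 𝒱 g, ∀ d ∈ 𝒟 h, (MulOpposite.op d) • v ∈ 𝒱 (g * h))
    -- `W`, a graded left `D`-vector space
    {W : Type*} [AddCommGroup W] [Module D W]
    (𝒲 : G → AddSubgroup W)
    (hWdecomp : DirectSum.IsInternal 𝒲)
    (hWsmul : ∀ g h : G, ∀ d ∈ 𝒟 g, ∀ w ∈ 𝒲 h, d • w ∈ 𝒲 (g * h))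
    -- the nondegenerate homogeneous `D`-bilinear pairing realizing `W ⊆ V^{gr*}`
    (B : W → V → D)
    (hBadd₁ : ∀ w w' v, B (w + w') v = B w v + B w' v)
    (hBadd₂ : ∀ w v v', B w (v + v') = B w v + B w v')
    (hBl : ∀ (d : D) (w : W) (v : V), B (d • w) v = d * B w v)
    (hBr : ∀ (w : W) (v : V) (d : D), B w ((MulOpposite.op d) • v) = B w v * d)
    (hBgr : ∀ a b : G, ∀ w ∈ 𝒲 a, ∀ v ∈ 𝒱 b, B w v ∈ 𝒟 (a * b))
    (hBnd₁ : ∀ w : W, (∀ v : V, B w v = 0) → w = 0)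
    (hBnd₂ : ∀ v : V, (∀ w : W, B w v = 0) → v = 0) :
    -- `𝔏` and `𝔉`
    ∀ 𝔏 𝔉 : AddSubgroup (Module.End Dᵐᵒᵖ V),
    𝔏 = AddSubgroup.closure {A : Module.End Dᵐᵒᵖ V | IsHomogeneousOp 𝒱 (⇑A) ∧
        ∀ w : W, ∃ w' : W, ∀ v : V, B w (A v) = B w' v} →
    𝔉 = AddSubgroup.closure {A : Module.End Dᵐᵒᵖ V | ∃ g₁ g₂ : G, ∃ v ∈ 𝒱 g₁,
        ∃ w ∈ 𝒲 g₂, ∀ u : V, A u = (MulOpposite.op (B w u)) • v} →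
    (IsIdealOf 𝔏 𝔉 ∧ IsGradedOpSubgroup 𝒱 𝔉) ∧
    IsGradedSimpleOpSubgroup 𝒱 𝔉 ∧
    ∀ R : AddSubgroup (Module.End Dᵐᵒᵖ V),
      𝔉 ≤ R → R ≤ 𝔏 → (∀ x ∈ R, ∀ y ∈ R, x * y ∈ R) → IsGradedOpSubgroup 𝒱 R →
      (IsGradedSimpleOpSubgroup 𝒱 R ↔ R = 𝔉) := by
  intro 𝔏 𝔉 h𝔏 h𝔉
  subst h𝔏 h𝔉
  set E : V → W → Module.End Dᵐᵒᵖ V := rankOne B hBadd₂ hBr with hEdef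
  set S𝔉 : Set (Module.End Dᵐᵒᵖ V) := {A : Module.End Dᵐᵒᵖ V | ∃ g₁ g₂ : G, ∃ v ∈ 𝒱 g₁,
        ∃ w ∈ 𝒲 g₂, ∀ u : V, A u = (MulOpposite.op (B w u)) • v} with hS𝔉def
  set S𝔏 : Set (Module.End Dᵐᵒᵖ V) := {A : Module.End Dᵐᵒᵖ V | IsHomogeneousOp 𝒱 (⇑A) ∧
        ∀ w : W, ∃ w' : W, ∀ v : V, B w (A v) = B w' v} with hS𝔏def
  have hEapp : ∀ (v : V) (w : W) (u : V), E v w u = (MulOpposite.op (B w u)) • v :=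
    fun _ _ _ => rfl
  -- zero laws for B
  have hB0w : ∀ u : V, B (0 : W) u = 0 := by
    intro u
    have h := hBadd₁ 0 0 u
    rw [add_zero] at h
    exact (left_eq_add.mp h)
  have hBw0 : ∀ w : W, B w (0 : V) = 0 := by
    intro w
    have h := hBadd₂ w 0 0
    rw [add_zero] at h
    exact (left_eq_add.mp h)
  -- additivity of E
  have hEaddl : ∀ (v v' : V) (w : W), E (v + v') w = E v w + E v' w := by
    intro v v' w; ext u
    show (MulOpposite.op (B w u)) • (v + v') = E v w u + E v' w u
    rw [hEapp, hEapp, smul_add]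
  have hE0l : ∀ w : W, E 0 w = 0 := by
    intro w; ext u
    show (MulOpposite.op (B w u)) • (0 : V) = 0
    rw [smul_zero]
  have hEaddr : ∀ (v : V) (w w' : W), E v (w + w') = E v w + E v w' := by
    intro v w w'; ext u
    show (MulOpposite.op (B (w + w') u)) • v = E v w u + E v w' u
    rw [hEapp, hEapp, hBadd₁, MulOpposite.op_add, add_smul]
  have hE0r : ∀ v : V, E v 0 = 0 := by
    intro v; ext u
    show (MulOpposite.op (B (0 : W) u)) • v = 0
    rw [hB0w, MulOpposite.op_zero, zero_smul]
  -- generators are in 𝔉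
  have hEgen : ∀ g₁ g₂ : G, ∀ v ∈ 𝒱 g₁, ∀ w ∈ 𝒲 g₂, E v w ∈ S𝔉 :=
    fun g₁ g₂ v hv w hw => ⟨g₁, g₂, v, hv, w, hw, fun _ => rfl⟩
  have hEmem : ∀ g₁ g₂ : G, ∀ v ∈ 𝒱 g₁, ∀ w ∈ 𝒲 g₂, E v w ∈ AddSubgroup.closure S𝔉 :=
    fun g₁ g₂ v hv w hw => AddSubgroup.subset_closure (hEgen g₁ g₂ v hv w hw)
  have hEmemAll : ∀ (v : V) (w : W), E v w ∈ AddSubgroup.closure S𝔉 := by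
    intro v
    refine my_internal_induction 𝒱 hVdecomp (P := fun v => ∀ w : W, E v w ∈ AddSubgroup.closure S𝔉)
      ?_ ?_ ?_ v
    · intro w; rw [hE0l]; exact zero_mem _
    · intro a b ha hb w; rw [hEaddl]; exact add_mem (ha w) (hb w)
    · intro g v hv
      refine my_internal_induction 𝒲 hWdecomp
        (P := fun w => E v w ∈ AddSubgroup.closure S𝔉) ?_ ?_ ?_
      · show E v 0 ∈ _; rw [hE0r]; exact zero_mem _
      · intro a b ha hb
        show E v (a + b) ∈ _
        rw [hEaddr]; exact add_mem ha hb
      · intro g₂ w hw; exact hEmem g g₂ v hv w hw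
  -- homogeneity of generators
  have hEhomog : ∀ g₁ g₂ : G, ∀ v ∈ 𝒱 g₁, ∀ w ∈ 𝒲 g₂, IsHomogeneousOp 𝒱 (⇑(E v w)) := by
    intro g₁ g₂ v hv w hw
    refine ⟨g₁ * g₂, fun h u hu => ?_⟩
    show (MulOpposite.op (B w u)) • v ∈ 𝒱 (g₁ * g₂ * h)
    rw [mul_assoc]
    exact hVsmul g₁ (g₂ * h) v hv _ (hBgr g₂ h w hw u hu)
  -- every generator of 𝔉 equals some E v w
  have hgenE : ∀ A ∈ S𝔉, ∃ g₁ g₂ : G, ∃ v ∈ 𝒱 g₁, ∃ w ∈ 𝒲 g₂, A = E v w := by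
    intro A hA
    obtain ⟨g₁, g₂, v, hv, w, hw, hAu⟩ := hA
    exact ⟨g₁, g₂, v, hv, w, hw, LinearMap.ext hAu⟩
  -- S𝔉 ⊆ S𝔏
  have hSsub : S𝔉 ⊆ S𝔏 := by
    intro A hA
    obtain ⟨g₁, g₂, v, hv, w, hw, rfl⟩ := hgenE A hA
    refine ⟨hEhomog g₁ g₂ v hv w hw, fun w₀ => ⟨(B w₀ v) • w, fun u => ?_⟩⟩
    rw [hEapp, hBr, hBl]
  have h𝔉𝔏 : AddSubgroup.closure S𝔉 ≤ AddSubgroup.closure S𝔏 :=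
    AddSubgroup.closure_mono hSsub
  -- compositions with E
  have hAcomp : ∀ (A : Module.End Dᵐᵒᵖ V) (v : V) (w : W), A * E v w = E (A v) w := by
    intro A v w; ext u
    show A ((MulOpposite.op (B w u)) • v) = (MulOpposite.op (B w u)) • (A v)
    exact map_smul A _ _
  have hEcomp : ∀ (v : V) (w : W) (v' : V) (w' : W),
      E v w * E v' w' = E ((MulOpposite.op (B w v')) • v) w' := by
    intro v w v' w'; ext u
    show (MulOpposite.op (B w ((MulOpposite.op (B w' u)) • v'))) • v
      = (MulOpposite.op (B w' u)) • ((MulOpposite.op (B w v')) • v)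
    rw [hBr, MulOpposite.op_mul, mul_smul]
  have hEcompAdj : ∀ (v : V) (w : W) (A : Module.End Dᵐᵒᵖ V) (w' : W),
      (∀ u : V, B w (A u) = B w' u) → E v w * A = E v w' := by
    intro v w A w' h; ext u
    show (MulOpposite.op (B w (A u))) • v = (MulOpposite.op (B w' u)) • v
    rw [h u]
  -- left ideal property (for arbitrary endomorphisms)
  have hIdealL : ∀ (a : Module.End Dᵐᵒᵖ V), ∀ x ∈ AddSubgroup.closure S𝔉,
      a * x ∈ AddSubgroup.closure S𝔉 := by
    intro a x hx
    refine AddSubgroup.closure_induction (fun A hA => ?_) ?_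
      (fun x y _ _ hx hy => ?_) (fun x _ hx => ?_) hx
    · obtain ⟨g₁, g₂, v, hv, w, hw, rfl⟩ := hgenE A hA
      rw [hAcomp]
      exact hEmemAll _ _
    · rw [mul_zero]; exact zero_mem _
    · rw [mul_add]; exact add_mem hx hy
    · rw [mul_neg]; exact neg_mem hx
  -- right ideal property
  have hIdealR : ∀ a ∈ AddSubgroup.closure S𝔏, ∀ x ∈ AddSubgroup.closure S𝔉,
      x * a ∈ AddSubgroup.closure S𝔉 := by
    intro a ha
    refine AddSubgroup.closure_induction (fun a ha => ?_) ?_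
      (fun a b _ _ hia hib => ?_) (fun a _ hia => ?_) ha
    · intro x hx
      obtain ⟨-, hadj⟩ := ha
      refine AddSubgroup.closure_induction (fun A hA => ?_) ?_
        (fun x y _ _ hx hy => ?_) (fun x _ hx => ?_) hx
      · obtain ⟨g₁, g₂, v, hv, w, hw, rfl⟩ := hgenE A hA
        obtain ⟨w', hw'⟩ := hadj w
        rw [hEcompAdj v w a w' hw']
        exact hEmemAll _ _
      · rw [zero_mul]; exact zero_mem _
      · rw [add_mul]; exact add_mem hx hy
      · rw [neg_mul]; exact neg_mem hx
    · intro x hx; rw [mul_zero]; exact zero_mem _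
    · intro x hx; rw [mul_add]; exact add_mem (hia x hx) (hib x hx)
    · intro x hx; rw [mul_neg]; exact neg_mem (hia x hx)
  -- 𝔉 is graded
  have hGraded𝔉 : IsGradedOpSubgroup 𝒱 (AddSubgroup.closure S𝔉) := by
    intro x hx
    refine AddSubgroup.closure_mono ?_ hx
    intro A hA
    obtain ⟨g₁, g₂, v, hv, w, hw, rfl⟩ := hgenE A hA
    exact ⟨hEmemAll v w, hEhomog g₁ g₂ v hv w hw⟩
  -- units act injectively
  have hUnitSmul : ∀ d : D, IsUnit d → ∀ v : V, (MulOpposite.op d) • v = 0 → v = 0 := by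
    intro d hd v hv
    obtain ⟨u, rfl⟩ := hd
    have h : ((MulOpposite.op ((↑u⁻¹ : Dˣ) : D)) * MulOpposite.op ((u : Dˣ) : D)) • v = v := by
      rw [← MulOpposite.op_mul, Units.mul_inv, MulOpposite.op_one, one_smul]
    rw [mul_smul, hv, smul_zero] at h
    exact h.symm
  -- existence of nonzero homogeneous vector
  have hexV : ∃ g : G, ∃ v ∈ 𝒱 g, v ≠ (0 : V) := by
    obtain ⟨v, hv⟩ := exists_ne (0 : V)
    refine my_internal_induction 𝒱 hVdecomp
      (P := fun v => v ≠ 0 → ∃ g : G, ∃ u ∈ 𝒱 g, u ≠ (0 : V)) ?_ ?_ ?_ v hv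
    · intro h; exact absurd rfl h
    · intro a b ha hb hab
      by_cases h : a = 0
      · exact hb (by rintro rfl; rw [add_zero] at hab; exact hab h)
      · exact ha h
    · intro g v hv hne; exact ⟨g, v, hv, hne⟩
  -- for nonzero v there is a homogeneous w with B w v ≠ 0
  have hBhom : ∀ v : V, v ≠ 0 → ∃ a : G, ∃ w ∈ 𝒲 a, B w v ≠ 0 := by
    intro v hv
    have hw : ∃ w : W, B w v ≠ 0 := by
      by_contra h
      push_neg at h
      exact hv (hBnd₂ v h)
    obtain ⟨w, hw⟩ := hw
    refine my_internal_induction 𝒲 hWdecomp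
      (P := fun w => B w v ≠ 0 → ∃ a : G, ∃ w₀ ∈ 𝒲 a, B w₀ v ≠ 0) ?_ ?_ ?_ w hw
    · intro h; exact absurd (hB0w v) h
    · intro a b ha hb hab
      by_cases h : B a v = 0
      · refine hb fun h' => hab ?_
        rw [hBadd₁, h, h', add_zero]
      · exact ha h
    · intro g w hwg hne; exact ⟨g, w, hwg, hne⟩
  -- 𝔉 has nonzero square
  have hSq : ∃ x ∈ AddSubgroup.closure S𝔉, ∃ y ∈ AddSubgroup.closure S𝔉, x * y ≠ 0 := by
    obtain ⟨g₀, v₀, hv₀, hv₀ne⟩ := hexV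
    obtain ⟨a₀, w₀, hw₀, hdne⟩ := hBhom v₀ hv₀ne
    have hd : IsUnit (B w₀ v₀) := hDdiv _ hdne ⟨a₀ * g₀, hBgr a₀ g₀ w₀ hw₀ v₀ hv₀⟩
    refine ⟨E v₀ w₀, hEmemAll _ _, E v₀ w₀, hEmemAll _ _, fun h => ?_⟩
    have h1 : (E v₀ w₀ * E v₀ w₀) v₀ = (MulOpposite.op (B w₀ v₀ * B w₀ v₀)) • v₀ := by
      rw [hEcomp, hEapp, ← mul_smul, ← MulOpposite.op_mul]
    rw [h] at h1
    exact hv₀ne (hUnitSmul _ (hd.mul hd) v₀ (by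
      rw [← h1]; exact (LinearMap.zero_apply v₀)))
  -- 𝔉 is graded simple
  have hSimple : IsGradedSimpleOpSubgroup 𝒱 (AddSubgroup.closure S𝔉) := by
    refine ⟨hSq, fun T hT hTgr => ?_⟩
    obtain ⟨hTle, hTmul⟩ := hT
    by_cases hTbot : T = ⊥
    · exact Or.inl hTbot
    right
    -- get a nonzero element of T
    have hx : ∃ x ∈ T, x ≠ (0 : Module.End Dᵐᵒᵖ V) := by
      by_contra h
      push_neg at h
      exact hTbot ((AddSubgroup.eq_bot_iff_forall T).mpr h)
    obtain ⟨x, hxT, hxne⟩ := hx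
    -- get a nonzero homogeneous element of T
    have hy : ∃ y ∈ T, IsHomogeneousOp 𝒱 (⇑y) ∧ y ≠ (0 : Module.End Dᵐᵒᵖ V) := by
      by_contra h
      push_neg at h
      have hsub : {y : Module.End Dᵐᵒᵖ V | y ∈ T ∧ IsHomogeneousOp 𝒱 (⇑y)}
          ⊆ ((⊥ : AddSubgroup (Module.End Dᵐᵒᵖ V)) : Set (Module.End Dᵐᵒᵖ V)) := by
        rintro y ⟨h1, h2⟩
        simpa using h y h1 h2
      have := (AddSubgroup.closure_le ⊥).mpr hsub (hTgr x hxT)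
      exact hxne (by simpa using this)
    obtain ⟨y, hyT, ⟨t, ht⟩, hyne⟩ := hy
    -- find a homogeneous u₀ with y u₀ ≠ 0
    have hu : ∃ u : V, y u ≠ 0 := by
      by_contra h
      push_neg at h
      exact hyne (LinearMap.ext h)
    obtain ⟨u, hu⟩ := hu
    have hu₀ : ∃ g : G, ∃ u₀ ∈ 𝒱 g, y u₀ ≠ 0 := by
      refine my_internal_induction 𝒱 hVdecomp
        (P := fun u => y u ≠ 0 → ∃ g : G, ∃ u₀ ∈ 𝒱 g, y u₀ ≠ 0) ?_ ?_ ?_ u hu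
      · intro h; exact absurd (map_zero y) h
      · intro a b ha hb hab
        by_cases h : y a = 0
        · refine hb fun h' => hab ?_
          rw [map_add, h, h', add_zero]
        · exact ha h
      · intro g u₀ hg hne; exact ⟨g, u₀, hg, hne⟩
    obtain ⟨g, u₀, hu₀g, hyu₀⟩ := hu₀
    have hv₀mem : y u₀ ∈ 𝒱 (t * g) := ht g u₀ hu₀g
    obtain ⟨c, b₀, hb₀, heb⟩ := hBhom (y u₀) hyu₀
    have he : IsUnit (B b₀ (y u₀)) :=
      hDdiv _ heb ⟨c * (t * g), hBgr c (t * g) b₀ hb₀ _ hv₀mem⟩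
    obtain ⟨e, he'⟩ := he
    -- every E v w lies in T
    have hET : ∀ (v : V) (w : W), E v w ∈ T := by
      intro v w
      have h1 : y * E u₀ w = E (y u₀) w := hAcomp y u₀ w
      have h2 : E ((MulOpposite.op ((↑e⁻¹ : Dˣ) : D)) • v) b₀ * E (y u₀) w = E v w := by
        rw [hEcomp]
        congr 1
        rw [← mul_smul, ← MulOpposite.op_mul, ← he', Units.inv_mul,
          MulOpposite.op_one, one_smul]
      have m1 : y * E u₀ w ∈ T := (hTmul (E u₀ w) (hEmemAll u₀ w) y hyT).2
      have m2 : E ((MulOpposite.op ((↑e⁻¹ : Dˣ) : D)) • v) b₀ * (y * E u₀ w) ∈ T :=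
        (hTmul _ (hEmemAll _ _) _ m1).1
      rw [h1, h2] at m2
      exact m2
    refine le_antisymm hTle ?_
    rw [AddSubgroup.closure_le]
    intro A hA
    obtain ⟨g₁, g₂, v, hv, w, hw, rfl⟩ := hgenE A hA
    exact hET v w
  refine ⟨⟨⟨h𝔉𝔏, fun a ha x hx => ⟨hIdealL a x hx, hIdealR a ha x hx⟩⟩, hGraded𝔉⟩, hSimple, ?_⟩
  -- the consequence for R
  intro R hFR hRL hRmul hRgr
  constructor
  · rintro ⟨-, hideal⟩
    have hIdealOfR : IsIdealOf R (AddSubgroup.closure S𝔉) :=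
      ⟨hFR, fun a ha x hx => ⟨hIdealL a x hx, hIdealR a (hRL ha) x hx⟩⟩
    rcases hideal _ hIdealOfR hGraded𝔉 with h | h
    · exfalso
      obtain ⟨x, hx, y, hy, hxy⟩ := hSq
      rw [h] at hx
      exact hxy (by rw [AddSubgroup.mem_bot.mp hx, zero_mul])
    · exact h.symm
  · intro h
    rw [h]
    exact hSimple
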